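/- Let d ∈ ℕ, m ∈ ℕ₀, and let f : [0,1]^d → [0,1] be monotone. Partition [0,1]^d into (m+1)^d subcubes C_i = ∏_{j=1}^d I_{i_j} indexed by i ∈ {0,…,m}^d, where I_i = [i/(m+1), (i+1)/(m+1)) for 0 ≤ i ≤ m−1 and I_m = [m/(m+1), 1]. Define g : [0,1]^d → [0,1] by setting, for x ∈ C_i, g(x) = (f(i/(m+1)) + f((i+1)/(m+1)))/2, where i/(m+1) and (i+1)/(m+1) ∈ [0,1]^d are the lower and upper corners of C_i (here i+1 adds 1 to every coordinate of i). Then ∫_{[0,1]^d} |f − g| dλ^d ≤ d / (2(m+1)). -/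

import Mathlib

open MeasureTheory Finset

lemma aux_sum (d n : ℕ) (hd : 1 ≤ d) (hn : 0 < n) (f : (Fin d → ℝ) → ℝ)
    (hf01 : ∀ x ∈ Set.Icc (0 : Fin d → ℝ) 1, f x ∈ Set.Icc (0 : ℝ) 1) :
    ∑ i : Fin d → Fin n,
      (f (fun j => (((i j : ℕ) + 1 : ℕ) : ℝ) / n) - f (fun j => ((i j : ℕ) : ℝ) / n))
      ≤ (d : ℝ) * (n : ℝ) ^ (d - 1) := by
  have hnR : (0:ℝ) < n := by exact_mod_cast hn
  -- v i k : the point with first k coordinates bumped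
  set v : (Fin d → ℕ) → ℕ → (Fin d → ℝ) :=
    fun i k j => (((if (j:ℕ) < k then i j + 1 else i j : ℕ)) : ℝ) / n with hv
  have key : ∀ i : Fin d → Fin n,
      f (fun j => (((i j : ℕ) + 1 : ℕ) : ℝ) / n) - f (fun j => ((i j : ℕ) : ℝ) / n)
        = ∑ k ∈ range d, (f (v (fun j => (i j : ℕ)) (k+1)) - f (v (fun j => (i j : ℕ)) k)) := by
    intro i
    have e1 : (fun j => (((i j : ℕ) + 1 : ℕ) : ℝ) / n) = v (fun j => (i j : ℕ)) d := by
      funext j; simp only [hv, if_pos (j.isLt)]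
    have e0 : (fun j => ((i j : ℕ) : ℝ) / n) = v (fun j => (i j : ℕ)) 0 := by
      funext j; simp [hv]
    rw [Finset.sum_range_sub (fun k => f (v (fun j => (i j : ℕ)) k)), e1, e0]
  simp_rw [key]
  rw [Finset.sum_comm]
  have hcard : ∀ k : Fin d, (Fintype.card ({j : Fin d // j ≠ k} → Fin n) : ℝ) = (n:ℝ) ^ (d-1) := by
    intro k
    rw [Fintype.card_fun]
    norm_cast
    congr 1
    · simp
    · simpa using Set.card_ne_eq k
  have inner : ∀ k ∈ range d,
      (∑ i : Fin d → Fin n, (f (v (fun j => (i j : ℕ)) (k+1)) - f (v (fun j => (i j : ℕ)) k)))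
        ≤ (n : ℝ) ^ (d - 1) := by
    intro k hk
    rw [Finset.mem_range] at hk
    set jk : Fin d := ⟨k, hk⟩ with hjk
    set e := Equiv.funSplitAt jk (Fin n) with he
    rw [← Equiv.sum_comp e.symm (fun i => f (v (fun j => (i j : ℕ)) (k+1)) - f (v (fun j => (i j : ℕ)) k)),
      Fintype.sum_prod_type, Finset.sum_comm]
    -- for fixed r, the inner sum telescopes
    have step : ∀ r : {j : Fin d // j ≠ jk} → Fin n,
        (∑ a : Fin n, (f (v (fun j => ((e.symm (a, r)) j : ℕ)) (k+1))
          - f (v (fun j => ((e.symm (a, r)) j : ℕ)) k))) ≤ 1 := by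
      intro r
      set w : ℕ → (Fin d → ℝ) := fun t j =>
        (if h : j = jk then (t:ℝ) else (((if (j:ℕ) < k then (r ⟨j, h⟩ : ℕ) + 1 else (r ⟨j, h⟩ : ℕ)) : ℕ) : ℝ)) / n with hw
      have hv1 : ∀ a : Fin n, v (fun j => ((e.symm (a, r)) j : ℕ)) (k+1) = w ((a:ℕ)+1) := by
        intro a
        funext j
        by_cases h : j = jk
        · subst h
          simp only [hv, hw, he, Equiv.funSplitAt_symm_apply]
          simp [Nat.lt_succ_self, hjk]
        · have hjne : (j:ℕ) ≠ k := by
            intro hc; exact h (Fin.ext hc)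
          have : ((j:ℕ) < k + 1) ↔ ((j:ℕ) < k) := by omega
          simp only [hv, hw, he, dif_neg h, Equiv.funSplitAt_symm_apply, this]
      have hv0 : ∀ a : Fin n, v (fun j => ((e.symm (a, r)) j : ℕ)) k = w (a:ℕ) := by
        intro a
        funext j
        by_cases h : j = jk
        · subst h
          simp only [hv, hw, he, Equiv.funSplitAt_symm_apply]
          simp [hjk]
        · simp only [hv, hw, he, dif_neg h, Equiv.funSplitAt_symm_apply]
      simp_rw [hv1, hv0]
      rw [Fin.sum_univ_eq_sum_range (fun a => f (w (a+1)) - f (w a)) n,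
        Finset.sum_range_sub (fun a => f (w a))]
      have hwmem : ∀ t : ℕ, t ≤ n → w t ∈ Set.Icc (0 : Fin d → ℝ) 1 := by
        intro t ht
        constructor <;> intro j <;> by_cases h : j = jk
        · subst h; simp only [hw, Pi.zero_apply]; rw [dif_pos trivial]; positivity
        · simp only [hw, Pi.zero_apply, dif_neg h]; positivity
        · subst h; simp only [hw, Pi.one_apply]; rw [dif_pos trivial]
          rw [div_le_one hnR]; exact_mod_cast ht
        · simp only [hw, Pi.one_apply, dif_neg h]
          rw [div_le_one hnR]
          have : (r ⟨j, h⟩ : ℕ) + 1 ≤ n := (r ⟨j, h⟩).isLt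
          split_ifs <;> exact_mod_cast by omega
      have h1 := hf01 (w n) (hwmem n le_rfl)
      have h0 := hf01 (w 0) (hwmem 0 (Nat.zero_le n))
      simp only [Set.mem_Icc] at h1 h0
      linarith
    calc (∑ r : {j : Fin d // j ≠ jk} → Fin n, ∑ a : Fin n,
            (f (v (fun j => ((e.symm (a, r)) j : ℕ)) (k+1)) - f (v (fun j => ((e.symm (a, r)) j : ℕ)) k)))
        ≤ ∑ r : {j : Fin d // j ≠ jk} → Fin n, (1:ℝ) :=
          Finset.sum_le_sum (fun r _ => step r)
      _ = (n : ℝ) ^ (d - 1) := by rw [Finset.sum_const]; simp [hcard jk]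
  calc (∑ k ∈ range d, ∑ i : Fin d → Fin n,
        (f (v (fun j => (i j : ℕ)) (k+1)) - f (v (fun j => (i j : ℕ)) k)))
      ≤ ∑ k ∈ range d, (n : ℝ) ^ (d-1) := Finset.sum_le_sum inner
    _ = (d : ℝ) * (n : ℝ) ^ (d-1) := by simp [mul_comm]


theorem stmt11 (d : ℕ) (hd : 1 ≤ d) (m : ℕ)
    (f : (Fin d → ℝ) → ℝ)
    (hf01 : ∀ x ∈ Set.Icc (0 : Fin d → ℝ) 1, f x ∈ Set.Icc (0 : ℝ) 1)
    (hmono : ∀ x ∈ Set.Icc (0 : Fin d → ℝ) 1, ∀ z ∈ Set.Icc (0 : Fin d → ℝ) 1,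
      x ≤ z → f x ≤ f z) :
    (∫ x in Set.Icc (0 : Fin d → ℝ) 1,
        |f x -
          (f (fun j => ((min ⌊((m : ℝ) + 1) * x j⌋₊ m : ℕ) : ℝ) / ((m : ℝ) + 1)) +
           f (fun j => ((min ⌊((m : ℝ) + 1) * x j⌋₊ m + 1 : ℕ) : ℝ) / ((m : ℝ) + 1))) / 2|)
      ≤ (d : ℝ) / (2 * ((m : ℝ) + 1)) := by
  classical
  set nR : ℝ := (m : ℝ) + 1 with hnRdef
  have hnR : (0:ℝ) < nR := by positivity
  set lo : (Fin d → ℝ) → (Fin d → ℝ) := fun x j => ((min ⌊nR * x j⌋₊ m : ℕ) : ℝ) / nR with hlodef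
  set hi : (Fin d → ℝ) → (Fin d → ℝ) := fun x j => ((min ⌊nR * x j⌋₊ m + 1 : ℕ) : ℝ) / nR with hhidef
  show (∫ x in Set.Icc (0 : Fin d → ℝ) 1, |f x - (f (lo x) + f (hi x)) / 2|)
      ≤ (d : ℝ) / (2 * nR)
  set D : (Fin d → ℝ) → ℝ := fun x => (f (hi x) - f (lo x)) / 2 with hDdef
  -- pointwise facts
  have hlo_mem : ∀ x ∈ Set.Icc (0 : Fin d → ℝ) 1, lo x ∈ Set.Icc (0 : Fin d → ℝ) 1 := by
    intro x hx
    constructor <;> intro j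
    · simp only [hlodef, Pi.zero_apply]; positivity
    · simp only [hlodef, Pi.one_apply]
      rw [div_le_one hnR]
      have : (min ⌊nR * x j⌋₊ m : ℕ) ≤ m := min_le_right _ _
      have : ((min ⌊nR * x j⌋₊ m : ℕ) : ℝ) ≤ m := by exact_mod_cast this
      linarith
  have hhi_mem : ∀ x ∈ Set.Icc (0 : Fin d → ℝ) 1, hi x ∈ Set.Icc (0 : Fin d → ℝ) 1 := by
    intro x hx
    constructor <;> intro j
    · simp only [hhidef, Pi.zero_apply]; positivity
    · simp only [hhidef, Pi.one_apply]
      rw [div_le_one hnR]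
      have : (min ⌊nR * x j⌋₊ m + 1 : ℕ) ≤ m + 1 := by
        have := min_le_right ⌊nR * x j⌋₊ m; omega
      have : ((min ⌊nR * x j⌋₊ m + 1 : ℕ) : ℝ) ≤ (m:ℝ) + 1 := by exact_mod_cast this
      linarith
  have hlo_le : ∀ x ∈ Set.Icc (0 : Fin d → ℝ) 1, lo x ≤ x := by
    intro x hx j
    simp only [hlodef]
    rw [div_le_iff₀ hnR]
    have hx0 : 0 ≤ x j := hx.1 j
    have h1 : ((min ⌊nR * x j⌋₊ m : ℕ) : ℝ) ≤ (⌊nR * x j⌋₊ : ℝ) := by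
      exact_mod_cast min_le_left _ _
    have h2 : (⌊nR * x j⌋₊ : ℝ) ≤ nR * x j := Nat.floor_le (by positivity)
    nlinarith
  have hhi_ge : ∀ x ∈ Set.Icc (0 : Fin d → ℝ) 1, x ≤ hi x := by
    intro x hx j
    simp only [hhidef]
    rw [le_div_iff₀ hnR]
    have hx1 : x j ≤ 1 := hx.2 j
    by_cases h : ⌊nR * x j⌋₊ ≤ m
    · rw [min_eq_left h]
      have := Nat.lt_floor_add_one (nR * x j)
      push_cast
      nlinarith
    · push_neg at h
      rw [min_eq_right (by omega : m ≤ ⌊nR * x j⌋₊)]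
      push_cast
      nlinarith
  have hpt : ∀ x ∈ Set.Icc (0 : Fin d → ℝ) 1, |f x - (f (lo x) + f (hi x)) / 2| ≤ D x := by
    intro x hx
    have h1 := hmono (lo x) (hlo_mem x hx) x hx (hlo_le x hx)
    have h2 := hmono x hx (hi x) (hhi_mem x hx) (hhi_ge x hx)
    rw [hDdef, abs_le]
    constructor <;> [skip; skip] <;> dsimp only <;> linarith
  by_cases hInt : IntegrableOn (fun x => |f x - (f (lo x) + f (hi x)) / 2|)
      (Set.Icc (0 : Fin d → ℝ) 1) volume
  swap
  · rw [integral_undef hInt]; positivity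
  -- boxes
  set box : (Fin d → Fin (m+1)) → Set (Fin d → ℝ) :=
    fun i => Set.pi Set.univ fun j => Set.Ico (((i j : ℕ) : ℝ)/nR) ((((i j : ℕ) : ℝ)+1)/nR)
    with hboxdef
  set S : Set (Fin d → ℝ) := Set.pi Set.univ fun _ : Fin d => Set.Ico (0:ℝ) 1 with hSdef
  have hidx : ∀ i, ∀ x ∈ box i, ∀ j, ⌊nR * x j⌋₊ = (i j : ℕ) := by
    intro i x hx j
    have hj := hx j (Set.mem_univ j)
    obtain ⟨h1, h2⟩ := hj
    rw [div_le_iff₀ hnR] at h1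
    rw [lt_div_iff₀ hnR] at h2
    rw [Nat.floor_eq_iff (by nlinarith)]
    constructor <;> nlinarith
  have hbox_meas : ∀ i, MeasurableSet (box i) :=
    fun i => MeasurableSet.univ_pi fun j => measurableSet_Ico
  have hdisj : Pairwise (Function.onFun Disjoint box) := by
    intro i i' hne
    rw [Function.onFun, Set.disjoint_left]
    intro x hx hx'
    apply hne
    funext j
    have := (hidx i x hx j).symm.trans (hidx i' x hx' j)
    exact Fin.ext this
  have hcover : S = ⋃ i, box i := by
    ext x
    constructor
    · intro hx
      have hx' : ∀ j, 0 ≤ x j ∧ x j < 1 := fun j => hx j (Set.mem_univ j)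
      have hfl : ∀ j, ⌊nR * x j⌋₊ < m + 1 := by
        intro j
        rw [Nat.floor_lt (by nlinarith [(hx' j).1])]
        push_cast
        nlinarith [(hx' j).1, (hx' j).2]
      refine Set.mem_iUnion.2 ⟨fun j => ⟨⌊nR * x j⌋₊, hfl j⟩, ?_⟩
      intro j _
      constructor
      · rw [div_le_iff₀ hnR]
        have := Nat.floor_le (show 0 ≤ nR * x j by nlinarith [(hx' j).1])
        simpa [mul_comm] using this
      · rw [lt_div_iff₀ hnR]
        have := Nat.lt_floor_add_one (nR * x j)
        simpa [mul_comm] using this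
    · intro hx
      obtain ⟨i, hi'⟩ := Set.mem_iUnion.1 hx
      intro j _
      obtain ⟨h1, h2⟩ := hi' j (Set.mem_univ j)
      constructor
      · have : (0:ℝ) ≤ ((i j : ℕ) : ℝ)/nR := by positivity
        linarith
      · have hij : ((i j : ℕ) : ℝ) + 1 ≤ nR := by
          have := (i j).isLt
          rw [hnRdef]
          push_cast
          exact_mod_cast by omega
        have : (((i j : ℕ) : ℝ)+1)/nR ≤ 1 := by rw [div_le_one hnR]; linarith
        linarith
  have hae : (Set.Icc (0 : Fin d → ℝ) 1 : Set _) =ᵐ[volume] S := by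
    rw [MeasureTheory.ae_eq_set]
    constructor
    · apply measure_mono_null
        (show Set.Icc (0 : Fin d → ℝ) 1 \ S ⊆ ⋃ j : Fin d, Function.eval j ⁻¹' ({1} : Set ℝ) from ?_)
      · apply measure_iUnion_null
        intro j
        rw [Set.eval_preimage]
        rw [MeasureTheory.volume_pi_pi]
        apply Finset.prod_eq_zero (Finset.mem_univ j)
        simp [Function.update_self]
      · rintro x ⟨hx1, hx2⟩
        rw [hSdef, Set.mem_pi] at hx2
        push_neg at hx2
        obtain ⟨j, _, hj⟩ := hx2
        rw [Set.mem_Ico] at hj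
        push_neg at hj
        have h0 := hx1.1 j
        have h1 := hx1.2 j
        refine Set.mem_iUnion.2 ⟨j, ?_⟩
        have : x j = 1 := le_antisymm h1 (hj h0)
        simpa [Function.eval] using this
    · have : S \ Set.Icc (0 : Fin d → ℝ) 1 = ∅ := by
        rw [Set.diff_eq_empty]
        intro x hx
        constructor <;> intro j
        · exact (hx j (Set.mem_univ j)).1
        · exact le_of_lt (hx j (Set.mem_univ j)).2
      rw [this]; simp
  -- values on boxes
  set P : (Fin d → Fin (m+1)) → (Fin d → ℝ) := fun i j => ((i j : ℕ) : ℝ)/nR with hPdef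
  set Q : (Fin d → Fin (m+1)) → (Fin d → ℝ) := fun i j => (((i j : ℕ) + 1 : ℕ) : ℝ)/nR with hQdef
  set c : (Fin d → Fin (m+1)) → ℝ := fun i => (f (Q i) - f (P i))/2 with hcdef
  have hconst : ∀ i, Set.EqOn D (fun _ => c i) (box i) := by
    intro i x hx
    have hm : ∀ j, min ⌊nR * x j⌋₊ m = (i j : ℕ) := by
      intro j
      rw [hidx i x hx j]
      exact min_eq_left (by have := (i j).isLt; omega)
    have hl : lo x = P i := by funext j; simp only [hlodef, hPdef, hm j]
    have hh : hi x = Q i := by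
      funext j; simp only [hhidef, hQdef, hm j]
    simp only [hDdef, hcdef, hl, hh]
  have hvol : ∀ i, volume (box i) = ENNReal.ofReal (1/nR) ^ d := by
    intro i
    rw [hboxdef]
    rw [MeasureTheory.volume_pi_pi]
    have : ∀ j : Fin d, volume (Set.Ico (((i j : ℕ) : ℝ)/nR) ((((i j : ℕ) : ℝ)+1)/nR))
        = ENNReal.ofReal (1/nR) := by
      intro j
      rw [Real.volume_Ico]
      congr 1
      field_simp
      ring
    simp_rw [this]
    simp
  have hvol_lt : ∀ i, volume (box i) < ⊤ := by
    intro i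
    rw [hvol i]
    exact ENNReal.pow_lt_top ENNReal.ofReal_lt_top
  have hDint_box : ∀ i, IntegrableOn D (box i) volume := by
    intro i
    rw [integrableOn_congr_fun (hconst i) (hbox_meas i)]
    exact integrableOn_const (hvol_lt i).ne
  have hDint : IntegrableOn D (Set.Icc (0 : Fin d → ℝ) 1) volume := by
    rw [IntegrableOn, Measure.restrict_congr_set hae, ← IntegrableOn, hcover]
    exact integrableOn_finite_iUnion.2 hDint_box
  -- the integral computation
  have hIntD : (∫ x in Set.Icc (0 : Fin d → ℝ) 1, D x) = ∑ i : Fin d → Fin (m+1), (1/nR)^d * c i := by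
    rw [setIntegral_congr_set hae, hcover,
      integral_iUnion_fintype hbox_meas hdisj hDint_box]
    congr 1
    funext i
    rw [setIntegral_congr_fun (hbox_meas i) (hconst i), setIntegral_const, Measure.real, hvol,
      ENNReal.toReal_pow, ENNReal.toReal_ofReal (by positivity), smul_eq_mul]
  have hsum : ∑ i : Fin d → Fin (m+1), c i ≤ (d : ℝ) * nR ^ (d-1) / 2 := by
    have hA := aux_sum d (m+1) hd (Nat.succ_pos m) f hf01
    rw [show ((m+1:ℕ):ℝ) = nR from by push_cast; ring] at hA
    have : ∑ i : Fin d → Fin (m+1), c i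
        = (∑ i : Fin d → Fin (m+1),
            (f (fun j => (((i j : ℕ) + 1 : ℕ) : ℝ) / nR) - f (fun j => ((i j : ℕ) : ℝ) / nR))) / 2 := by
      rw [Finset.sum_div]
    rw [this]
    linarith
  calc (∫ x in Set.Icc (0 : Fin d → ℝ) 1, |f x - (f (lo x) + f (hi x)) / 2|)
      ≤ ∫ x in Set.Icc (0 : Fin d → ℝ) 1, D x :=
        setIntegral_mono_on hInt hDint measurableSet_Icc hpt
    _ = ∑ i : Fin d → Fin (m+1), (1/nR)^d * c i := hIntD
    _ = (1/nR)^d * ∑ i : Fin d → Fin (m+1), c i := by rw [Finset.mul_sum]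
    _ ≤ (1/nR)^d * ((d : ℝ) * nR ^ (d-1) / 2) := by
        apply mul_le_mul_of_nonneg_left hsum (by positivity)
    _ = (d : ℝ) / (2 * nR) := by
        have hpow : nR ^ d = nR ^ (d-1) * nR := by
          rw [← pow_succ]
          congr 1
          omega
        rw [div_pow, one_pow]
        rw [hpow]
        field_simp
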